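/- For large n, the optimal integer fractional covering ratio of the n×n grid satisfies 7 − ε ≤ ifcov(G_{n×n}) ≤ 213/25. -/

import Mathlib

set_option maxHeartbeats 2000000

/-- The `r × c` grid graph. -/
def fgrid (r c : ℕ) : SimpleGraph (Fin r × Fin c) where
  Adj p q := ((p.1 : ℤ) - q.1).natAbs + ((p.2 : ℤ) - q.2).natAbs = 1
  symm := ⟨by intro p q h; omega⟩
  loopless := ⟨by intro p h; simp at h⟩

/-- An integer distribution fractionally covers the `n × n` grid if every vertex has
weight at least 1. -/
def FracCovers (n : ℕ) (D : Fin n × Fin n → ℕ) : Prop :=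
  ∀ u, 1 ≤ ∑ v, (D v : ℝ) * (1 / 2) ^ ((fgrid n n).dist u v)

/-- The optimal integer fractional covering ratio of the `n × n` grid. -/
noncomputable def ifcov (n : ℕ) : ℝ :=
  sSup {r : ℝ | ∃ D : Fin n × Fin n → ℕ, FracCovers n D ∧
    r = (n : ℝ) ^ 2 / (∑ v, (D v : ℝ))}

/-- ℓ1 distance -/
def l1 {n : ℕ} (u v : Fin n × Fin n) : ℕ :=
  ((u.1 : ℤ) - v.1).natAbs + ((u.2 : ℤ) - v.2).natAbs

lemma exists_walk {n : ℕ} (u v : Fin n × Fin n) :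
    ∃ p : (fgrid n n).Walk u v, p.length = l1 u v := by
  obtain ⟨k, hk⟩ : ∃ k, l1 u v = k := ⟨_, rfl⟩
  induction k generalizing u with
  | zero =>
      have : u = v := by
        unfold l1 at hk
        have h1 : u.1 = v.1 := by ext; omega
        have h2 : u.2 = v.2 := by ext; omega
        exact Prod.ext h1 h2
      subst this
      exact ⟨SimpleGraph.Walk.nil, by simp [hk]⟩
  | succ k ih =>
      -- find w adjacent to u with l1 w v = k
      have : ∃ w : Fin n × Fin n, (fgrid n n).Adj u w ∧ l1 w v = k := by
        unfold l1 at hk ⊢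
        rcases lt_trichotomy (u.1 : ℕ) (v.1 : ℕ) with h | h | h
        · refine ⟨(⟨u.1 + 1, by omega⟩, u.2), ?_, ?_⟩ <;>
            simp [fgrid] <;> omega
        · rcases lt_trichotomy (u.2 : ℕ) (v.2 : ℕ) with h2 | h2 | h2
          · refine ⟨(u.1, ⟨u.2 + 1, by omega⟩), ?_, ?_⟩ <;>
              simp [fgrid] <;> omega
          · omega
          · refine ⟨(u.1, ⟨u.2 - 1, by omega⟩), ?_, ?_⟩ <;>
              simp [fgrid] <;> omega
        · refine ⟨(⟨u.1 - 1, by omega⟩, u.2), ?_, ?_⟩ <;>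
            simp [fgrid] <;> omega
      obtain ⟨w, hadj, hw⟩ := this
      obtain ⟨p, hp⟩ := ih w hw
      exact ⟨SimpleGraph.Walk.cons hadj p, by simp [hp]; omega⟩

lemma walk_le {n : ℕ} {u v : Fin n × Fin n} (p : (fgrid n n).Walk u v) :
    l1 u v ≤ p.length := by
  induction p with
  | nil => simp [l1]
  | cons h q ih =>
      rename_i a b c
      have hadj : ((a.1 : ℤ) - b.1).natAbs + ((a.2 : ℤ) - b.2).natAbs = 1 := h
      unfold l1 at *
      simp only [SimpleGraph.Walk.length_cons]
      omega

lemma dist_fgrid {n : ℕ} (u v : Fin n × Fin n) :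
    (fgrid n n).dist u v = l1 u v := by
  obtain ⟨p, hp⟩ := exists_walk u v
  refine le_antisymm (hp ▸ SimpleGraph.dist_le p) ?_
  have hr : (fgrid n n).Reachable u v := ⟨p⟩
  obtain ⟨q, hq⟩ := hr.exists_walk_length_eq_dist
  rw [← hq]; exact walk_le q

lemma l1_comm {n : ℕ} (u v : Fin n × Fin n) : l1 u v = l1 v u := by unfold l1; omega

lemma l1_self {n : ℕ} (u : Fin n × Fin n) : l1 u u = 0 := by unfold l1; omega



lemma part1 (t : ℕ) : ∑ x ∈ Finset.range (t+1), ((1:ℝ)/2) ^ ((t:ℤ) - x).natAbs ≤ 2 := by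
  have := Finset.sum_range_reflect (fun i => ((1:ℝ)/2) ^ ((t:ℤ) - i).natAbs) (t+1)
  rw [← this]
  have : ∀ j ∈ Finset.range (t+1), ((1:ℝ)/2) ^ ((t:ℤ) - ((t + 1 - 1 - j : ℕ) : ℤ)).natAbs = ((1:ℝ)/2)^j := by
    intro j hj
    simp only [Finset.mem_range] at hj
    congr 1
    omega
  rw [Finset.sum_congr rfl this]
  exact sum_geometric_two_le _

lemma part2 (t n : ℕ) : ∑ x ∈ Finset.Ico (t+1) n, ((1:ℝ)/2) ^ ((t:ℤ) - x).natAbs ≤ 1 := by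
  rw [Finset.sum_Ico_eq_sum_range]
  have : ∀ j ∈ Finset.range (n - (t+1)), ((1:ℝ)/2) ^ ((t:ℤ) - ((t+1+j : ℕ) : ℤ)).natAbs = (1/2) * ((1:ℝ)/2)^j := by
    intro j hj
    rw [← pow_succ']
    congr 1
    omega
  rw [Finset.sum_congr rfl this, ← Finset.mul_sum]
  have := sum_geometric_two_le (n - (t+1))
  nlinarith [this]

lemma row_le_three (n t : ℕ) (ht : t < n) :
    ∑ x ∈ Finset.range n, ((1:ℝ)/2) ^ ((t:ℤ) - x).natAbs ≤ 3 := by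
  rw [Finset.range_eq_Ico, ← Finset.sum_Ico_consecutive _ (Nat.zero_le (t+1)) (by omega),
    ← Finset.range_eq_Ico]
  have := part1 t
  have := part2 t n
  linarith

lemma row_left (n : ℕ) :
    ∑ x ∈ Finset.range n, ((1:ℝ)/2) ^ ((0:ℤ) - x).natAbs ≤ 2 := by
  have : ∀ x ∈ Finset.range n, ((1:ℝ)/2) ^ ((0:ℤ) - x).natAbs = ((1:ℝ)/2)^x := by
    intro x _; congr 1; omega
  rw [Finset.sum_congr rfl this]
  exact sum_geometric_two_le _

lemma row_right (n t : ℕ) (ht : t + 1 = n) :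
    ∑ x ∈ Finset.range n, ((1:ℝ)/2) ^ ((t:ℤ) - x).natAbs ≤ 2 := by
  subst ht
  exact part1 t

lemma row_nonneg (n t : ℕ) : 0 ≤ ∑ x ∈ Finset.range n, ((1:ℝ)/2) ^ ((t:ℤ) - x).natAbs :=
  Finset.sum_nonneg fun _ _ => by positivity

lemma S_factor {n : ℕ} (v : Fin n × Fin n) :
    ∑ u : Fin n × Fin n, ((1:ℝ)/2) ^ (l1 v u) =
      (∑ x ∈ Finset.range n, ((1:ℝ)/2) ^ (((v.1:ℕ):ℤ) - x).natAbs) *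
      (∑ y ∈ Finset.range n, ((1:ℝ)/2) ^ (((v.2:ℕ):ℤ) - y).natAbs) := by
  rw [Finset.sum_mul_sum, Fintype.sum_prod_type]
  rw [← Fin.sum_univ_eq_sum_range (fun x => _) n]
  refine Finset.sum_congr rfl fun x _ => ?_
  rw [← Fin.sum_univ_eq_sum_range (fun y => _) n]
  refine Finset.sum_congr rfl fun y _ => ?_
  rw [l1, pow_add]

lemma S_le_nine {n : ℕ} (v : Fin n × Fin n) :
    ∑ u : Fin n × Fin n, ((1:ℝ)/2) ^ (l1 v u) ≤ 9 := by
  rw [S_factor]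
  have h1 := row_le_three n v.1 v.1.isLt
  have h2 := row_le_three n v.2 v.2.isLt
  nlinarith [row_nonneg n v.1, row_nonneg n v.2]

def Bdry {n : ℕ} (v : Fin n × Fin n) : Prop :=
  v.1.val = 0 ∨ v.1.val + 1 = n ∨ v.2.val = 0 ∨ v.2.val + 1 = n

lemma S_le_six {n : ℕ} (v : Fin n × Fin n) (hb : Bdry v) :
    ∑ u : Fin n × Fin n, ((1:ℝ)/2) ^ (l1 v u) ≤ 6 := by
  rw [S_factor]
  have h1 := row_le_three n v.1 v.1.isLt
  have h2 := row_le_three n v.2 v.2.isLt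
  have n1 := row_nonneg n v.1
  have n2 := row_nonneg n v.2
  rcases hb with h | h | h | h
  · have := row_left n; rw [h] at *; push_cast [h] at *; nlinarith
  · have := row_right n v.1 h; nlinarith
  · have := row_left n; rw [h] at *; push_cast [h] at *; nlinarith
  · have := row_right n v.2 h; nlinarith

lemma oneD (a : ℤ) : ((1:ℝ)/2)^((a-1).natAbs) + ((1:ℝ)/2)^((a+1).natAbs)
    ≤ 5/2 * ((1:ℝ)/2)^(a.natAbs) := by
  rcases lt_trichotomy a 0 with h | h | h
  · obtain ⟨m, hm⟩ : ∃ m, a.natAbs = m + 1 := ⟨a.natAbs - 1, by omega⟩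
    have h1 : (a-1).natAbs = m + 2 := by omega
    have h2 : (a+1).natAbs = m := by omega
    rw [h1, h2, hm]
    have : (0:ℝ) < (1/2)^m := by positivity
    simp only [pow_succ]
    nlinarith
  · subst h; norm_num
  · obtain ⟨m, hm⟩ : ∃ m, a.natAbs = m + 1 := ⟨a.natAbs - 1, by omega⟩
    have h1 : (a-1).natAbs = m := by omega
    have h2 : (a+1).natAbs = m + 2 := by omega
    rw [h1, h2, hm]
    have : (0:ℝ) < (1/2)^m := by positivity
    simp only [pow_succ]
    nlinarith

lemma oneD_nonneg (k : ℕ) : (0:ℝ) ≤ ((1:ℝ)/2)^k := by positivity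

lemma dual {n : ℕ} (u z w1 w2 w3 w4 : Fin n × Fin n)
    (h1 : (w1.1 : ℕ) = u.1 + 1 ∧ (w1.2 : ℕ) = u.2 + 1)
    (h2 : (w2.1 : ℕ) = u.1 + 1 ∧ (w2.2 : ℕ) + 1 = u.2)
    (h3 : (w3.1 : ℕ) + 1 = u.1 ∧ (w3.2 : ℕ) = u.2 + 1)
    (h4 : (w4.1 : ℕ) + 1 = u.1 ∧ (w4.2 : ℕ) + 1 = u.2) :
    ((1:ℝ)/2)^(l1 w1 z) + ((1:ℝ)/2)^(l1 w2 z) + ((1:ℝ)/2)^(l1 w3 z) + ((1:ℝ)/2)^(l1 w4 z)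
      ≤ 25/4 * ((1:ℝ)/2)^(l1 u z) := by
  set a : ℤ := (u.1 : ℤ) - z.1 with ha
  set b : ℤ := (u.2 : ℤ) - z.2 with hb
  have e1 : l1 w1 z = (a+1).natAbs + (b+1).natAbs := by unfold l1; omega
  have e2 : l1 w2 z = (a+1).natAbs + (b-1).natAbs := by unfold l1; omega
  have e3 : l1 w3 z = (a-1).natAbs + (b+1).natAbs := by unfold l1; omega
  have e4 : l1 w4 z = (a-1).natAbs + (b-1).natAbs := by unfold l1; omega
  have e0 : l1 u z = a.natAbs + b.natAbs := by unfold l1; omega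
  rw [e1, e2, e3, e4, e0, pow_add, pow_add, pow_add, pow_add, pow_add]
  have hA := oneD a
  have hB := oneD b
  have nA1 := oneD_nonneg ((a-1).natAbs)
  have nA2 := oneD_nonneg ((a+1).natAbs)
  have nB1 := oneD_nonneg ((b-1).natAbs)
  have nB2 := oneD_nonneg ((b+1).natAbs)
  have nA := oneD_nonneg (a.natAbs)
  have nB := oneD_nonneg (b.natAbs)
  nlinarith [mul_le_mul hA hB (by linarith) (by linarith)]

section main
variable {n : ℕ} (D : Fin n × Fin n → ℕ)

/-- weight at u -/
noncomputable def wt (u : Fin n × Fin n) : ℝ := ∑ v, (D v : ℝ) * ((1:ℝ)/2) ^ (l1 u v)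

lemma wt_excess (hD : ∀ u, 1 ≤ wt D u) (u : Fin n × Fin n)
    (hx1 : 1 ≤ u.1.val) (hx2 : u.1.val + 2 ≤ n) (hy1 : 1 ≤ u.2.val) (hy2 : u.2.val + 2 ≤ n) :
    1 + 12/25 * (D u : ℝ) ≤ wt D u := by
  by_cases h0 : D u = 0
  · simpa [h0] using hD u
  have hDu : (1:ℝ) ≤ (D u : ℝ) := by exact_mod_cast Nat.one_le_iff_ne_zero.2 h0
  set w1 : Fin n × Fin n := (⟨u.1.val + 1, by omega⟩, ⟨u.2.val + 1, by omega⟩) with hw1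
  set w2 : Fin n × Fin n := (⟨u.1.val + 1, by omega⟩, ⟨u.2.val - 1, by omega⟩) with hw2
  set w3 : Fin n × Fin n := (⟨u.1.val - 1, by omega⟩, ⟨u.2.val + 1, by omega⟩) with hw3
  set w4 : Fin n × Fin n := (⟨u.1.val - 1, by omega⟩, ⟨u.2.val - 1, by omega⟩) with hw4
  have hc1 : (w1.1 : ℕ) = u.1 + 1 ∧ (w1.2 : ℕ) = u.2 + 1 := by constructor <;> simp [hw1]
  have hc2 : (w2.1 : ℕ) = u.1 + 1 ∧ (w2.2 : ℕ) + 1 = u.2 := by constructor <;> (simp [hw2]; try omega)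
  have hc3 : (w3.1 : ℕ) + 1 = u.1 ∧ (w3.2 : ℕ) = u.2 + 1 := by constructor <;> (simp [hw3]; try omega)
  have hc4 : (w4.1 : ℕ) + 1 = u.1 ∧ (w4.2 : ℕ) + 1 = u.2 := by constructor <;> (simp [hw4]; try omega)
  have hcomb : wt D w1 + wt D w2 + wt D w3 + wt D w4 =
      ∑ v, (D v : ℝ) * (((1:ℝ)/2)^(l1 w1 v) + ((1:ℝ)/2)^(l1 w2 v) + ((1:ℝ)/2)^(l1 w3 v)
        + ((1:ℝ)/2)^(l1 w4 v)) := by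
    unfold wt
    rw [← Finset.sum_add_distrib, ← Finset.sum_add_distrib, ← Finset.sum_add_distrib]
    exact Finset.sum_congr rfl fun v _ => by ring
  -- split off v = u
  have hsplit : ∀ f : (Fin n × Fin n) → ℝ, (∑ v, f v) = (∑ v ∈ Finset.univ.erase u, f v) + f u :=
    fun f => (Finset.sum_erase_add _ _ (Finset.mem_univ u)).symm
  have hgu : ((1:ℝ)/2)^(l1 w1 u) + ((1:ℝ)/2)^(l1 w2 u) + ((1:ℝ)/2)^(l1 w3 u)
      + ((1:ℝ)/2)^(l1 w4 u) = 1 := by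
    have e1 : l1 w1 u = 2 := by unfold l1; omega
    have e2 : l1 w2 u = 2 := by unfold l1; omega
    have e3 : l1 w3 u = 2 := by unfold l1; omega
    have e4 : l1 w4 u = 2 := by unfold l1; omega
    rw [e1, e2, e3, e4]; norm_num
  have hbound : ∑ v, (D v : ℝ) * (((1:ℝ)/2)^(l1 w1 v) + ((1:ℝ)/2)^(l1 w2 v) + ((1:ℝ)/2)^(l1 w3 v)
        + ((1:ℝ)/2)^(l1 w4 v)) ≤ 25/4 * (wt D u - (D u : ℝ)) + (D u : ℝ) := by
    rw [hsplit]
    have h1 : ∑ v ∈ Finset.univ.erase u, (D v : ℝ) * (((1:ℝ)/2)^(l1 w1 v) + ((1:ℝ)/2)^(l1 w2 v)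
        + ((1:ℝ)/2)^(l1 w3 v) + ((1:ℝ)/2)^(l1 w4 v))
        ≤ ∑ v ∈ Finset.univ.erase u, (D v : ℝ) * (25/4 * ((1:ℝ)/2)^(l1 u v)) := by
      refine Finset.sum_le_sum fun v _ => ?_
      refine mul_le_mul_of_nonneg_left ?_ (Nat.cast_nonneg _)
      have := dual u v w1 w2 w3 w4 hc1 hc2 hc3 hc4
      linarith
    have h2 : ∑ v ∈ Finset.univ.erase u, (D v : ℝ) * (25/4 * ((1:ℝ)/2)^(l1 u v))
        = 25/4 * ∑ v ∈ Finset.univ.erase u, (D v : ℝ) * ((1:ℝ)/2)^(l1 u v) := by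
      rw [Finset.mul_sum]
      exact Finset.sum_congr rfl fun v _ => by ring
    have hwtu : wt D u = (∑ v ∈ Finset.univ.erase u, (D v : ℝ) * ((1:ℝ)/2)^(l1 u v)) + (D u : ℝ) := by
      unfold wt
      rw [hsplit (fun v => (D v : ℝ) * ((1:ℝ)/2)^(l1 u v)), l1_self]
      norm_num
    rw [hgu]
    rw [h2] at h1
    rw [hwtu]
    linarith
  have h4 : 4 ≤ wt D w1 + wt D w2 + wt D w3 + wt D w4 := by
    have := hD w1; have := hD w2; have := hD w3; have := hD w4; linarith
  rw [hcomb] at h4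
  linarith
end main

section glob
variable {n : ℕ} (D : Fin n × Fin n → ℕ)

def Intr {n : ℕ} (u : Fin n × Fin n) : Prop :=
  1 ≤ u.1.val ∧ u.1.val + 2 ≤ n ∧ 1 ≤ u.2.val ∧ u.2.val + 2 ≤ n

instance {n : ℕ} (u : Fin n × Fin n) : Decidable (Intr u) := by unfold Intr; infer_instance

lemma upper (hD : ∀ u, 1 ≤ wt D u) : (n:ℝ)^2 ≤ 213/25 * ∑ v, (D v : ℝ) := by
  have swap : ∑ u, wt D u = ∑ v, (D v : ℝ) * ∑ u, ((1:ℝ)/2)^(l1 v u) := by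
    unfold wt
    rw [Finset.sum_comm]
    refine Finset.sum_congr rfl fun v _ => ?_
    rw [Finset.mul_sum]
    exact Finset.sum_congr rfl fun u _ => by rw [l1_comm]
  have hL : (n:ℝ)^2 + ∑ u, (if Intr u then 12/25 * (D u:ℝ) else 0) ≤ ∑ u, wt D u := by
    have h1 : ∑ u : Fin n × Fin n, ((1:ℝ) + if Intr u then 12/25 * (D u:ℝ) else 0)
        ≤ ∑ u, wt D u := by
      refine Finset.sum_le_sum fun u _ => ?_
      by_cases h : Intr u
      · simp only [h, if_true]
        exact wt_excess D hD u h.1 h.2.1 h.2.2.1 h.2.2.2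
      · simpa [h] using hD u
    rw [Finset.sum_add_distrib] at h1
    have hc : ∑ _u : Fin n × Fin n, (1:ℝ) = (n:ℝ)^2 := by
      rw [Finset.sum_const, Finset.card_univ]
      simp [Fintype.card_prod]
      ring
    rw [hc] at h1
    exact h1
  have hR : ∑ u, wt D u ≤ ∑ v, (if Intr v then (9:ℝ) else 6) * (D v:ℝ) := by
    rw [swap]
    refine Finset.sum_le_sum fun v _ => ?_
    by_cases h : Intr v
    · simp only [h, if_true]
      rw [mul_comm ((9:ℝ)) _]
      exact mul_le_mul_of_nonneg_left (S_le_nine v) (Nat.cast_nonneg _)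
    · simp only [h, if_false]
      rw [mul_comm ((6:ℝ)) _]
      refine mul_le_mul_of_nonneg_left (S_le_six v ?_) (Nat.cast_nonneg _)
      unfold Bdry
      unfold Intr at h
      have := v.1.isLt; have := v.2.isLt
      omega
  have hE : ∑ v, ((if Intr v then (9:ℝ) else 6) * (D v:ℝ) - (if Intr v then 12/25 * (D v:ℝ) else 0))
      ≤ ∑ v, 213/25 * (D v:ℝ) := by
    refine Finset.sum_le_sum fun v _ => ?_
    by_cases h : Intr v
    · simp only [h, if_true]; have := Nat.cast_nonneg (α := ℝ) (D v); linarith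
    · simp only [h, if_false]; have := Nat.cast_nonneg (α := ℝ) (D v); linarith
  rw [Finset.sum_sub_distrib, ← Finset.mul_sum] at hE
  linarith
end glob

def D0 (n : ℕ) (v : Fin n × Fin n) : ℕ :=
  (if (v.1.val + 2 * v.2.val) % 7 = 0 then 1 else 0) +
  (if v.1.val < 5 then 1 else 0) + (if n ≤ v.1.val + 5 then 1 else 0) +
  (if v.2.val < 5 then 1 else 0) + (if n ≤ v.2.val + 5 then 1 else 0)

lemma one_le_D0 {n : ℕ} (v : Fin n × Fin n)
    (h : (v.1.val + 2 * v.2.val) % 7 = 0 ∨ v.1.val < 5 ∨ n ≤ v.1.val + 5 ∨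
      v.2.val < 5 ∨ n ≤ v.2.val + 5) : 1 ≤ D0 n v := by
  have key : ∀ a b c d e : ℕ, (a = 1 ∨ b = 1 ∨ c = 1 ∨ d = 1 ∨ e = 1) →
      1 ≤ a + b + c + d + e := by intros; omega
  unfold D0
  apply key
  rcases h with h | h | h | h | h
  · exact Or.inl (if_pos h)
  · exact Or.inr (Or.inl (if_pos h))
  · exact Or.inr (Or.inr (Or.inl (if_pos h)))
  · exact Or.inr (Or.inr (Or.inr (Or.inl (if_pos h))))
  · exact Or.inr (Or.inr (Or.inr (Or.inr (if_pos h))))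

lemma cover_list {n : ℕ} (D : Fin n × Fin n → ℕ) (u : Fin n × Fin n)
    (l : List (Fin n × Fin n)) (hnd : l.Nodup) (h1 : ∀ v ∈ l, 1 ≤ D v)
    (hs : 1 ≤ (l.map (fun v => ((1:ℝ)/2)^(l1 u v))).sum) :
    1 ≤ ∑ v, (D v : ℝ) * ((1:ℝ)/2) ^ (l1 u v) := by
  have e1 : (l.map (fun v => ((1:ℝ)/2)^(l1 u v))).sum
      = ∑ v ∈ l.toFinset, ((1:ℝ)/2)^(l1 u v) := (List.sum_toFinset _ hnd).symm
  rw [e1] at hs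
  have h2 : ∑ v ∈ l.toFinset, ((1:ℝ)/2)^(l1 u v)
      ≤ ∑ v ∈ l.toFinset, (D v : ℝ) * ((1:ℝ)/2)^(l1 u v) := by
    refine Finset.sum_le_sum fun v hv => ?_
    have hD : (1:ℝ) ≤ (D v : ℝ) := by
      exact_mod_cast h1 v (by simpa using hv)
    nlinarith [pow_nonneg (by norm_num : (0:ℝ) ≤ (1:ℝ)/2) (l1 u v)]
  have h3 : ∑ v ∈ l.toFinset, (D v : ℝ) * ((1:ℝ)/2)^(l1 u v)
      ≤ ∑ v, (D v : ℝ) * ((1:ℝ)/2)^(l1 u v) := by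
    refine Finset.sum_le_sum_of_subset_of_nonneg (Finset.subset_univ _) fun v _ _ => ?_
    positivity
  linarith

lemma D0_covers (n : ℕ) (u : Fin n × Fin n) :
    1 ≤ ∑ v, (D0 n v : ℝ) * ((1:ℝ)/2) ^ (l1 u v) := by
  by_cases hdeep : 5 ≤ u.1.val ∧ u.1.val + 6 ≤ n ∧ 5 ≤ u.2.val ∧ u.2.val + 6 ≤ n
  case neg =>
    refine cover_list _ u [u] (by simp) ?_ ?_
    · intro v hv
      simp only [List.mem_cons, List.not_mem_nil, or_false] at hv
      rw [hv]
      apply one_le_D0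
      have := u.1.isLt; have := u.2.isLt
      omega
    · simp [l1_self]
  case pos =>
    obtain ⟨hx1, hx2, hy1, hy2⟩ := hdeep
    have hc : (u.1.val + 2 * u.2.val) % 7 = 0 ∨ (u.1.val + 2 * u.2.val) % 7 = 1 ∨
      (u.1.val + 2 * u.2.val) % 7 = 2 ∨ (u.1.val + 2 * u.2.val) % 7 = 3 ∨
      (u.1.val + 2 * u.2.val) % 7 = 4 ∨ (u.1.val + 2 * u.2.val) % 7 = 5 ∨
      (u.1.val + 2 * u.2.val) % 7 = 6 := by omega
    rcases hc with hc | hc | hc | hc | hc | hc | hc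

    · refine cover_list _ u [(⟨u.1.val + 0, by omega⟩, ⟨u.2.val + 0, by omega⟩)] ?_ ?_ ?_
      · simp [List.nodup_cons, Prod.ext_iff, Fin.ext_iff] <;> omega
      · intro v hv
        simp only [List.mem_cons, List.not_mem_nil, or_false] at hv
        rcases hv with rfl
        all_goals exact one_le_D0 _ (Or.inl (by simp <;> omega))
      · simp only [List.map_cons, List.map_nil, List.sum_cons, List.sum_nil]
        rw [show l1 u (⟨u.1.val + 0, by omega⟩, ⟨u.2.val + 0, by omega⟩) = 0 by unfold l1; simp <;> omega]
        norm_num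

    · refine cover_list _ u [(⟨u.1.val - 1, by omega⟩, ⟨u.2.val + 0, by omega⟩), (⟨u.1.val + 1, by omega⟩, ⟨u.2.val - 1, by omega⟩), (⟨u.1.val + 0, by omega⟩, ⟨u.2.val + 3, by omega⟩), (⟨u.1.val - 3, by omega⟩, ⟨u.2.val + 1, by omega⟩), (⟨u.1.val + 0, by omega⟩, ⟨u.2.val - 4, by omega⟩)] ?_ ?_ ?_
      · simp [List.nodup_cons, Prod.ext_iff, Fin.ext_iff] <;> omega
      · intro v hv
        simp only [List.mem_cons, List.not_mem_nil, or_false] at hv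
        rcases hv with rfl | rfl | rfl | rfl | rfl
        all_goals exact one_le_D0 _ (Or.inl (by simp <;> omega))
      · simp only [List.map_cons, List.map_nil, List.sum_cons, List.sum_nil]
        rw [show l1 u (⟨u.1.val - 1, by omega⟩, ⟨u.2.val + 0, by omega⟩) = 1 by unfold l1; simp <;> omega]
        rw [show l1 u (⟨u.1.val + 1, by omega⟩, ⟨u.2.val - 1, by omega⟩) = 2 by unfold l1; simp <;> omega]
        rw [show l1 u (⟨u.1.val + 0, by omega⟩, ⟨u.2.val + 3, by omega⟩) = 3 by unfold l1; simp <;> omega]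
        rw [show l1 u (⟨u.1.val - 3, by omega⟩, ⟨u.2.val + 1, by omega⟩) = 4 by unfold l1; simp <;> omega]
        rw [show l1 u (⟨u.1.val + 0, by omega⟩, ⟨u.2.val - 4, by omega⟩) = 4 by unfold l1; simp <;> omega]
        norm_num

    · refine cover_list _ u [(⟨u.1.val + 0, by omega⟩, ⟨u.2.val - 1, by omega⟩), (⟨u.1.val - 2, by omega⟩, ⟨u.2.val + 0, by omega⟩), (⟨u.1.val + 1, by omega⟩, ⟨u.2.val + 2, by omega⟩), (⟨u.1.val - 1, by omega⟩, ⟨u.2.val + 3, by omega⟩), (⟨u.1.val + 2, by omega⟩, ⟨u.2.val - 2, by omega⟩)] ?_ ?_ ?_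
      · simp [List.nodup_cons, Prod.ext_iff, Fin.ext_iff] <;> omega
      · intro v hv
        simp only [List.mem_cons, List.not_mem_nil, or_false] at hv
        rcases hv with rfl | rfl | rfl | rfl | rfl
        all_goals exact one_le_D0 _ (Or.inl (by simp <;> omega))
      · simp only [List.map_cons, List.map_nil, List.sum_cons, List.sum_nil]
        rw [show l1 u (⟨u.1.val + 0, by omega⟩, ⟨u.2.val - 1, by omega⟩) = 1 by unfold l1; simp <;> omega]
        rw [show l1 u (⟨u.1.val - 2, by omega⟩, ⟨u.2.val + 0, by omega⟩) = 2 by unfold l1; simp <;> omega]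
        rw [show l1 u (⟨u.1.val + 1, by omega⟩, ⟨u.2.val + 2, by omega⟩) = 3 by unfold l1; simp <;> omega]
        rw [show l1 u (⟨u.1.val - 1, by omega⟩, ⟨u.2.val + 3, by omega⟩) = 4 by unfold l1; simp <;> omega]
        rw [show l1 u (⟨u.1.val + 2, by omega⟩, ⟨u.2.val - 2, by omega⟩) = 4 by unfold l1; simp <;> omega]
        norm_num

    · refine cover_list _ u [(⟨u.1.val - 1, by omega⟩, ⟨u.2.val - 1, by omega⟩), (⟨u.1.val + 0, by omega⟩, ⟨u.2.val + 2, by omega⟩), (⟨u.1.val - 3, by omega⟩, ⟨u.2.val + 0, by omega⟩), (⟨u.1.val + 1, by omega⟩, ⟨u.2.val - 2, by omega⟩), (⟨u.1.val + 2, by omega⟩, ⟨u.2.val + 1, by omega⟩), (⟨u.1.val + 4, by omega⟩, ⟨u.2.val + 0, by omega⟩), (⟨u.1.val - 2, by omega⟩, ⟨u.2.val + 3, by omega⟩), (⟨u.1.val + 0, by omega⟩, ⟨u.2.val - 5, by omega⟩)] ?_ ?_ ?_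
      · simp [List.nodup_cons, Prod.ext_iff, Fin.ext_iff] <;> omega
      · intro v hv
        simp only [List.mem_cons, List.not_mem_nil, or_false] at hv
        rcases hv with rfl | rfl | rfl | rfl | rfl | rfl | rfl | rfl
        all_goals exact one_le_D0 _ (Or.inl (by simp <;> omega))
      · simp only [List.map_cons, List.map_nil, List.sum_cons, List.sum_nil]
        rw [show l1 u (⟨u.1.val - 1, by omega⟩, ⟨u.2.val - 1, by omega⟩) = 2 by unfold l1; simp <;> omega]
        rw [show l1 u (⟨u.1.val + 0, by omega⟩, ⟨u.2.val + 2, by omega⟩) = 2 by unfold l1; simp <;> omega]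
        rw [show l1 u (⟨u.1.val - 3, by omega⟩, ⟨u.2.val + 0, by omega⟩) = 3 by unfold l1; simp <;> omega]
        rw [show l1 u (⟨u.1.val + 1, by omega⟩, ⟨u.2.val - 2, by omega⟩) = 3 by unfold l1; simp <;> omega]
        rw [show l1 u (⟨u.1.val + 2, by omega⟩, ⟨u.2.val + 1, by omega⟩) = 3 by unfold l1; simp <;> omega]
        rw [show l1 u (⟨u.1.val + 4, by omega⟩, ⟨u.2.val + 0, by omega⟩) = 4 by unfold l1; simp <;> omega]
        rw [show l1 u (⟨u.1.val - 2, by omega⟩, ⟨u.2.val + 3, by omega⟩) = 5 by unfold l1; simp <;> omega]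
        rw [show l1 u (⟨u.1.val + 0, by omega⟩, ⟨u.2.val - 5, by omega⟩) = 5 by unfold l1; simp <;> omega]
        norm_num

    · refine cover_list _ u [(⟨u.1.val + 0, by omega⟩, ⟨u.2.val - 2, by omega⟩), (⟨u.1.val + 1, by omega⟩, ⟨u.2.val + 1, by omega⟩), (⟨u.1.val - 2, by omega⟩, ⟨u.2.val - 1, by omega⟩), (⟨u.1.val - 1, by omega⟩, ⟨u.2.val + 2, by omega⟩), (⟨u.1.val + 3, by omega⟩, ⟨u.2.val + 0, by omega⟩), (⟨u.1.val - 4, by omega⟩, ⟨u.2.val + 0, by omega⟩), (⟨u.1.val + 0, by omega⟩, ⟨u.2.val + 5, by omega⟩), (⟨u.1.val + 2, by omega⟩, ⟨u.2.val - 3, by omega⟩)] ?_ ?_ ?_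
      · simp [List.nodup_cons, Prod.ext_iff, Fin.ext_iff] <;> omega
      · intro v hv
        simp only [List.mem_cons, List.not_mem_nil, or_false] at hv
        rcases hv with rfl | rfl | rfl | rfl | rfl | rfl | rfl | rfl
        all_goals exact one_le_D0 _ (Or.inl (by simp <;> omega))
      · simp only [List.map_cons, List.map_nil, List.sum_cons, List.sum_nil]
        rw [show l1 u (⟨u.1.val + 0, by omega⟩, ⟨u.2.val - 2, by omega⟩) = 2 by unfold l1; simp <;> omega]
        rw [show l1 u (⟨u.1.val + 1, by omega⟩, ⟨u.2.val + 1, by omega⟩) = 2 by unfold l1; simp <;> omega]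
        rw [show l1 u (⟨u.1.val - 2, by omega⟩, ⟨u.2.val - 1, by omega⟩) = 3 by unfold l1; simp <;> omega]
        rw [show l1 u (⟨u.1.val - 1, by omega⟩, ⟨u.2.val + 2, by omega⟩) = 3 by unfold l1; simp <;> omega]
        rw [show l1 u (⟨u.1.val + 3, by omega⟩, ⟨u.2.val + 0, by omega⟩) = 3 by unfold l1; simp <;> omega]
        rw [show l1 u (⟨u.1.val - 4, by omega⟩, ⟨u.2.val + 0, by omega⟩) = 4 by unfold l1; simp <;> omega]
        rw [show l1 u (⟨u.1.val + 0, by omega⟩, ⟨u.2.val + 5, by omega⟩) = 5 by unfold l1; simp <;> omega]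
        rw [show l1 u (⟨u.1.val + 2, by omega⟩, ⟨u.2.val - 3, by omega⟩) = 5 by unfold l1; simp <;> omega]
        norm_num

    · refine cover_list _ u [(⟨u.1.val + 0, by omega⟩, ⟨u.2.val + 1, by omega⟩), (⟨u.1.val + 2, by omega⟩, ⟨u.2.val + 0, by omega⟩), (⟨u.1.val - 1, by omega⟩, ⟨u.2.val - 2, by omega⟩), (⟨u.1.val - 3, by omega⟩, ⟨u.2.val - 1, by omega⟩), (⟨u.1.val - 2, by omega⟩, ⟨u.2.val + 2, by omega⟩)] ?_ ?_ ?_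
      · simp [List.nodup_cons, Prod.ext_iff, Fin.ext_iff] <;> omega
      · intro v hv
        simp only [List.mem_cons, List.not_mem_nil, or_false] at hv
        rcases hv with rfl | rfl | rfl | rfl | rfl
        all_goals exact one_le_D0 _ (Or.inl (by simp <;> omega))
      · simp only [List.map_cons, List.map_nil, List.sum_cons, List.sum_nil]
        rw [show l1 u (⟨u.1.val + 0, by omega⟩, ⟨u.2.val + 1, by omega⟩) = 1 by unfold l1; simp <;> omega]
        rw [show l1 u (⟨u.1.val + 2, by omega⟩, ⟨u.2.val + 0, by omega⟩) = 2 by unfold l1; simp <;> omega]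
        rw [show l1 u (⟨u.1.val - 1, by omega⟩, ⟨u.2.val - 2, by omega⟩) = 3 by unfold l1; simp <;> omega]
        rw [show l1 u (⟨u.1.val - 3, by omega⟩, ⟨u.2.val - 1, by omega⟩) = 4 by unfold l1; simp <;> omega]
        rw [show l1 u (⟨u.1.val - 2, by omega⟩, ⟨u.2.val + 2, by omega⟩) = 4 by unfold l1; simp <;> omega]
        norm_num

    · refine cover_list _ u [(⟨u.1.val + 1, by omega⟩, ⟨u.2.val + 0, by omega⟩), (⟨u.1.val - 1, by omega⟩, ⟨u.2.val + 1, by omega⟩), (⟨u.1.val + 0, by omega⟩, ⟨u.2.val - 3, by omega⟩), (⟨u.1.val - 2, by omega⟩, ⟨u.2.val - 2, by omega⟩), (⟨u.1.val + 0, by omega⟩, ⟨u.2.val + 4, by omega⟩)] ?_ ?_ ?_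
      · simp [List.nodup_cons, Prod.ext_iff, Fin.ext_iff] <;> omega
      · intro v hv
        simp only [List.mem_cons, List.not_mem_nil, or_false] at hv
        rcases hv with rfl | rfl | rfl | rfl | rfl
        all_goals exact one_le_D0 _ (Or.inl (by simp <;> omega))
      · simp only [List.map_cons, List.map_nil, List.sum_cons, List.sum_nil]
        rw [show l1 u (⟨u.1.val + 1, by omega⟩, ⟨u.2.val + 0, by omega⟩) = 1 by unfold l1; simp <;> omega]
        rw [show l1 u (⟨u.1.val - 1, by omega⟩, ⟨u.2.val + 1, by omega⟩) = 2 by unfold l1; simp <;> omega]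
        rw [show l1 u (⟨u.1.val + 0, by omega⟩, ⟨u.2.val - 3, by omega⟩) = 3 by unfold l1; simp <;> omega]
        rw [show l1 u (⟨u.1.val - 2, by omega⟩, ⟨u.2.val - 2, by omega⟩) = 4 by unfold l1; simp <;> omega]
        rw [show l1 u (⟨u.1.val + 0, by omega⟩, ⟨u.2.val + 4, by omega⟩) = 4 by unfold l1; simp <;> omega]
        norm_num

lemma count_le {n m : ℕ} (p : Fin n → Prop) [DecidablePred p] (f : Fin n → ℕ)
    (hmap : ∀ x, p x → f x < m) (hinj : ∀ x y, p x → p y → f x = f y → x = y) :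
    (Finset.univ.filter p).card ≤ m := by
  have h := Finset.card_le_card_of_injOn (s := Finset.univ.filter p) (t := Finset.range m) f
    (fun x hx => Finset.mem_range.2 (hmap x (Finset.mem_filter.1 hx).2))
    (fun x hx y hy h => hinj x y (Finset.mem_coe.1 hx |> Finset.mem_filter.1 |>.2)
      (Finset.mem_coe.1 hy |> Finset.mem_filter.1 |>.2) h)
  simpa using h

lemma sum_ind_le {n m : ℕ} (p : Fin n → Prop) [DecidablePred p] (f : Fin n → ℕ)
    (hmap : ∀ x, p x → f x < m) (hinj : ∀ x y, p x → p y → f x = f y → x = y) :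
    ∑ x : Fin n, (if p x then 1 else 0) ≤ m := by
  rw [Finset.sum_boole]
  exact_mod_cast count_le p f hmap hinj

lemma D0_sum_nat (n : ℕ) : ∑ v, D0 n v ≤ n * (n/7 + 1) + 20 * n := by
  unfold D0
  rw [Finset.sum_add_distrib, Finset.sum_add_distrib, Finset.sum_add_distrib,
    Finset.sum_add_distrib]
  have h1 : ∑ v : Fin n × Fin n, (if (v.1.val + 2 * v.2.val) % 7 = 0 then 1 else 0)
      ≤ n * (n/7 + 1) := by
    rw [Fintype.sum_prod_type]
    calc ∑ x : Fin n, ∑ y : Fin n, (if (x.val + 2 * y.val) % 7 = 0 then 1 else 0)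
        ≤ ∑ _x : Fin n, (n/7 + 1) := by
          refine Finset.sum_le_sum fun x _ => ?_
          refine sum_ind_le _ (fun y => y.val / 7)
            (fun y _ => by have := y.isLt; omega)
            (fun y z hy hz h => ?_)
          have := y.isLt; have := z.isLt
          ext
          omega
      _ = n * (n/7 + 1) := by simp [Finset.sum_const, mul_comm]
  have h2 : ∑ v : Fin n × Fin n, (if v.1.val < 5 then 1 else 0) ≤ 5 * n := by
    rw [Fintype.sum_prod_type]
    calc ∑ x : Fin n, ∑ _y : Fin n, (if x.val < 5 then 1 else 0)
        = ∑ x : Fin n, n * (if x.val < 5 then 1 else 0) := by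
          refine Finset.sum_congr rfl fun x _ => ?_
          rw [Finset.sum_const, Finset.card_univ, Fintype.card_fin, smul_eq_mul]
      _ = n * ∑ x : Fin n, (if x.val < 5 then 1 else 0) := by rw [Finset.mul_sum]
      _ ≤ n * 5 := by
          refine Nat.mul_le_mul_left n ?_
          refine sum_ind_le _ (fun x => x.val) (fun x hx => by omega)
            (fun x y _ _ h => by ext; omega)
      _ = 5 * n := by ring
  have h3 : ∑ v : Fin n × Fin n, (if n ≤ v.1.val + 5 then 1 else 0) ≤ 5 * n := by
    rw [Fintype.sum_prod_type]
    calc ∑ x : Fin n, ∑ _y : Fin n, (if n ≤ x.val + 5 then 1 else 0)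
        = ∑ x : Fin n, n * (if n ≤ x.val + 5 then 1 else 0) := by
          refine Finset.sum_congr rfl fun x _ => ?_
          rw [Finset.sum_const, Finset.card_univ, Fintype.card_fin, smul_eq_mul]
      _ = n * ∑ x : Fin n, (if n ≤ x.val + 5 then 1 else 0) := by rw [Finset.mul_sum]
      _ ≤ n * 5 := by
          refine Nat.mul_le_mul_left n ?_
          refine sum_ind_le _ (fun x => x.val - (n - 5)) (fun x hx => by have := x.isLt; omega)
            (fun x y hx hy h => by have := x.isLt; have := y.isLt; ext; omega)
      _ = 5 * n := by ring
  have h4 : ∑ v : Fin n × Fin n, (if v.2.val < 5 then 1 else 0) ≤ 5 * n := by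
    rw [Fintype.sum_prod_type_right]
    calc ∑ y : Fin n, ∑ _x : Fin n, (if y.val < 5 then 1 else 0)
        = ∑ y : Fin n, n * (if y.val < 5 then 1 else 0) := by
          refine Finset.sum_congr rfl fun y _ => ?_
          rw [Finset.sum_const, Finset.card_univ, Fintype.card_fin, smul_eq_mul]
      _ = n * ∑ y : Fin n, (if y.val < 5 then 1 else 0) := by rw [Finset.mul_sum]
      _ ≤ n * 5 := by
          refine Nat.mul_le_mul_left n ?_
          refine sum_ind_le _ (fun x => x.val) (fun x hx => by omega)
            (fun x y _ _ h => by ext; omega)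
      _ = 5 * n := by ring
  have h5 : ∑ v : Fin n × Fin n, (if n ≤ v.2.val + 5 then 1 else 0) ≤ 5 * n := by
    rw [Fintype.sum_prod_type_right]
    calc ∑ y : Fin n, ∑ _x : Fin n, (if n ≤ y.val + 5 then 1 else 0)
        = ∑ y : Fin n, n * (if n ≤ y.val + 5 then 1 else 0) := by
          refine Finset.sum_congr rfl fun y _ => ?_
          rw [Finset.sum_const, Finset.card_univ, Fintype.card_fin, smul_eq_mul]
      _ = n * ∑ y : Fin n, (if n ≤ y.val + 5 then 1 else 0) := by rw [Finset.mul_sum]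
      _ ≤ n * 5 := by
          refine Nat.mul_le_mul_left n ?_
          refine sum_ind_le _ (fun x => x.val - (n - 5)) (fun x hx => by have := x.isLt; omega)
            (fun x y hx hy h => by have := x.isLt; have := y.isLt; ext; omega)
      _ = 5 * n := by ring
  omega

lemma D0_sum_le_real (n : ℕ) : ∑ v, (D0 n v : ℝ) ≤ (n:ℝ)^2/7 + 21*n := by
  have h := D0_sum_nat n
  have hc : ∑ v, (D0 n v : ℝ) = ((∑ v, D0 n v : ℕ) : ℝ) := by push_cast; ring
  rw [hc]
  have h2 : ((∑ v, D0 n v : ℕ) : ℝ) ≤ ((n * (n/7 + 1) + 20 * n : ℕ) : ℝ) := by exact_mod_cast h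
  have h3 : ((n/7 : ℕ) : ℝ) ≤ (n:ℝ)/7 := Nat.cast_div_le
  push_cast at h2
  nlinarith [h2, h3, Nat.cast_nonneg (α := ℝ) n]

lemma fc_iff {n : ℕ} (D : Fin n × Fin n → ℕ) :
    FracCovers n D ↔ ∀ u, 1 ≤ wt D u := by
  unfold FracCovers wt
  constructor
  · intro h u; have := h u; simp only [dist_fgrid] at this; exact this
  · intro h u; have := h u; simp only [dist_fgrid]; exact this

/-- For every `ε > 0`, for all large `n`: `7 − ε ≤ ifcov(G_{n×n}) ≤ 213/25`. -/
theorem ifcov_bounds (ε : ℝ) (hε : 0 < ε) :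
    ∃ N : ℕ, ∀ n : ℕ, N ≤ n → 7 - ε ≤ ifcov n ∧ ifcov n ≤ 213 / 25 := by
  refine ⟨Nat.ceil (1029/ε) + 1, fun n hn => ?_⟩
  have hn1 : 1 ≤ n := le_trans (by omega) hn
  have hub : ∀ r ∈ {r : ℝ | ∃ D : Fin n × Fin n → ℕ, FracCovers n D ∧
      r = (n : ℝ) ^ 2 / (∑ v, (D v : ℝ))}, r ≤ 213/25 := by
    rintro r ⟨D, hD, rfl⟩
    have hw := (fc_iff D).1 hD
    have hpos : 0 < ∑ v, (D v : ℝ) := by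
      by_contra hle
      push_neg at hle
      have hnn : 0 ≤ ∑ v, (D v:ℝ) := Finset.sum_nonneg fun v _ => Nat.cast_nonneg _
      have h0 : ∑ v, (D v:ℝ) = 0 := le_antisymm hle hnn
      have hall := (Finset.sum_eq_zero_iff_of_nonneg
        (fun v (_ : v ∈ Finset.univ) => Nat.cast_nonneg (α := ℝ) (D v))).1 h0
      have hu0 := hw (⟨0, hn1⟩, ⟨0, hn1⟩)
      unfold wt at hu0
      rw [Finset.sum_eq_zero (fun v hv => by rw [hall v hv]; ring)] at hu0
      linarith
    rw [div_le_iff₀ hpos]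
    have := upper D hw
    linarith
  constructor
  · -- lower bound
    have hmem : ((n:ℝ)^2 / ∑ v, (D0 n v : ℝ)) ∈ {r : ℝ | ∃ D : Fin n × Fin n → ℕ,
        FracCovers n D ∧ r = (n : ℝ) ^ 2 / (∑ v, (D v : ℝ))} :=
      ⟨D0 n, (fc_iff (D0 n)).2 (fun u => by unfold wt; exact D0_covers n u), rfl⟩
    have hbdd : BddAbove {r : ℝ | ∃ D : Fin n × Fin n → ℕ, FracCovers n D ∧
        r = (n : ℝ) ^ 2 / (∑ v, (D v : ℝ))} := ⟨213/25, fun r hr => hub r hr⟩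
    have hle := le_csSup hbdd hmem
    have hS1 : 1 ≤ ∑ v, (D0 n v : ℝ) := by
      have hge : 1 ≤ D0 n ((⟨0, hn1⟩, ⟨0, hn1⟩) : Fin n × Fin n) :=
        one_le_D0 _ (Or.inr (Or.inl (by simp)))
      calc (1:ℝ) ≤ (D0 n ((⟨0, hn1⟩, ⟨0, hn1⟩) : Fin n × Fin n) : ℝ) := by exact_mod_cast hge
        _ ≤ ∑ v, (D0 n v : ℝ) :=
          Finset.single_le_sum (f := fun v => (D0 n v : ℝ))
            (fun v _ => Nat.cast_nonneg _) (Finset.mem_univ _)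
    have hcount := D0_sum_le_real n
    have hεn : 1029 ≤ ε * n := by
      have h1 : (1029:ℝ)/ε ≤ (Nat.ceil ((1029:ℝ)/ε) : ℝ) := Nat.le_ceil _
      have h2' : ((Nat.ceil ((1029:ℝ)/ε) : ℕ) : ℝ) + 1 ≤ (n:ℝ) := by exact_mod_cast hn
      have h3 : (1029:ℝ)/ε ≤ n := by linarith
      have := (div_le_iff₀ hε).1 h3
      linarith [mul_comm (n:ℝ) ε]
    have hfin : 7 - ε ≤ (n:ℝ)^2 / ∑ v, (D0 n v : ℝ) := by
      rw [le_div_iff₀ (by linarith : (0:ℝ) < ∑ v, (D0 n v : ℝ))]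
      have hnR : (1:ℝ) ≤ n := by exact_mod_cast hn1
      rcases le_or_gt (7 - ε) 0 with h | h
      · nlinarith
      · have step1 : (7-ε) * (∑ v, (D0 n v:ℝ)) ≤ (7-ε) * ((n:ℝ)^2/7 + 21*n) :=
          mul_le_mul_of_nonneg_left hcount (le_of_lt h)
        have step2 : (7-ε) * ((n:ℝ)^2/7 + 21*n) ≤ (n:ℝ)^2 := by
          nlinarith [mul_nonneg (by linarith : (0:ℝ) ≤ ε*n - 1029)
            (by linarith : (0:ℝ) ≤ (n:ℝ)), mul_pos hε (show (0:ℝ) < n by linarith)]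
        linarith
    unfold ifcov
    exact le_trans hfin hle
  · unfold ifcov
    exact Real.sSup_le hub (by norm_num)
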